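/- arXiv:2001.00366 — 2 statements merged into one kernel-verified Lean document; each statement's English description precedes it below -/
import Mathlib

section
/- Let Δ be a simplicial complex on [n], i a player, and 0 ≤ λᵢ ≤ 1. A linear functional φᵢ on the space of cooperative games on Δ satisfies the λᵢ-dummy axiom (φᵢ(v) = λᵢ·v({i}) whenever i is dummy for v) and the monotonicity axiom (φᵢ(v) ≥ 0 whenever v is monotone) if and only if there exist nonnegative reals {p_T^i : T ∈ Link_i(Δ)} with ∑_{T ∈ Link_i(Δ)} p_T^i = λᵢ such that φᵢ(v) = ∑_{T ∈ Link_i(Δ)} p_T^i · (v(T ∪ {i}) − v(T)) for all games v. -/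
open Finset

noncomputable section

def IsComplex {n : ℕ} (Δ : Finset (Finset (Fin n))) : Prop :=
  ∀ S ∈ Δ, ∀ T, T ⊆ S → T ∈ Δ

def carrier {n : ℕ} (T : Finset (Fin n)) : Finset (Fin n) → ℝ :=
  fun S => if T ⊆ S then 1 else 0

def carrierHat {n : ℕ} (T : Finset (Fin n)) : Finset (Fin n) → ℝ :=
  fun S => if T ⊂ S then 1 else 0

def indicatorGame {n : ℕ} (T : Finset (Fin n)) : Finset (Fin n) → ℝ :=
  fun S => if S = T then 1 else 0

def Link {n : ℕ} (i : Fin n) (Δ : Finset (Finset (Fin n))) : Finset (Finset (Fin n)) :=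
  Δ.filter fun T => i ∉ T ∧ insert i T ∈ Δ

def IsDummy {n : ℕ} (Δ : Finset (Finset (Fin n))) (v : Finset (Fin n) → ℝ) (i : Fin n) : Prop :=
  ∀ S ∈ Δ, i ∉ S → insert i S ∈ Δ → v (insert i S) = v S + v {i}

def MonotoneGame {n : ℕ} (Δ : Finset (Finset (Fin n))) (v : Finset (Fin n) → ℝ) : Prop :=
  ∀ S T : Finset (Fin n), T ∈ Δ → S ⊆ T → v S ≤ v T

def Facets {n : ℕ} (Δ : Finset (Finset (Fin n))) : Finset (Finset (Fin n)) :=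
  Δ.filter fun F => ∀ G ∈ Δ, F ⊆ G → F = G

def FacetsI {n : ℕ} (i : Fin n) (Δ : Finset (Finset (Fin n))) : Finset (Finset (Fin n)) :=
  (Facets Δ).filter fun F => i ∈ F

def wP {n : ℕ} (Δ : Finset (Finset (Fin n))) (P : Finset (Fin n) → ℝ)
    (T : Finset (Fin n)) : ℝ :=
  ∑ F ∈ (Facets Δ).filter (fun F => T ⊆ F), P F

def IsPure {n : ℕ} (Δ : Finset (Finset (Fin n))) : Prop :=
  ∀ F ∈ Facets Δ, ∀ G ∈ Facets Δ, F.card = G.card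

def shapley {n : ℕ} (F : Finset (Fin n)) (i : Fin n) (v : Finset (Fin n) → ℝ) : ℝ :=
  ∑ S ∈ (F.erase i).powerset,
    ((Nat.factorial S.card * Nat.factorial (F.card - S.card - 1) : ℝ) /
        (Nat.factorial F.card : ℝ)) * (v (insert i S) - v S)

def facetPolytope {n : ℕ} (Δ : Finset (Finset (Fin n))) : Set (Fin n → ℝ) :=
  convexHull ℝ {x : Fin n → ℝ | ∃ F ∈ Facets Δ, x = fun i => if i ∈ F then (1 : ℝ) else 0}

theorem dummy_and_monotone_characterization {n : ℕ} (Δ : Finset (Finset (Fin n)))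
    (hΔ : IsComplex Δ) (hempty : ∅ ∈ Δ) (i : Fin n) (lam : ℝ) (hl0 : 0 ≤ lam) (hl1 : lam ≤ 1)
    (φ : (Finset (Fin n) → ℝ) →ₗ[ℝ] ℝ) :
    ((∀ v : Finset (Fin n) → ℝ, v ∅ = 0 → IsDummy Δ v i → φ v = lam * v {i}) ∧
     (∀ v : Finset (Fin n) → ℝ, v ∅ = 0 → MonotoneGame Δ v → 0 ≤ φ v))
    ↔ ∃ p : Finset (Fin n) → ℝ,
        (∀ T ∈ Link i Δ, 0 ≤ p T) ∧
        (∑ T ∈ Link i Δ, p T = lam) ∧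
        (∀ v : Finset (Fin n) → ℝ, v ∅ = 0 →
          φ v = ∑ T ∈ Link i Δ, p T * (v (insert i T) - v T)) := by
  
  classical
  constructor
  · rintro ⟨h1, h2⟩
    -- coefficients vanish off the complex
    have hB : ∀ S : Finset (Fin n), S ∉ Δ → φ (indicatorGame S) = 0 := by
      intro S hS
      have hSne : S ≠ ∅ := fun h => hS (h ▸ hempty)
      have h0 : (indicatorGame S : Finset (Fin n) → ℝ) ∅ = 0 := by
        simp only [indicatorGame, ite_eq_right_iff]
        intro h; exact absurd (h ▸ hempty : S ∈ Δ) hS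
      have hzero : ∀ A B : Finset (Fin n), B ∈ Δ → A ⊆ B →
          indicatorGame S A = 0 ∧ indicatorGame S B = 0 := by
        intro A B hBΔ hAB
        constructor <;> simp only [indicatorGame, ite_eq_right_iff] <;> rintro rfl
        · exact absurd (hΔ B hBΔ A hAB) hS
        · exact absurd hBΔ hS
      have hm1 : MonotoneGame Δ (indicatorGame S) := by
        intro A B hBΔ hAB
        obtain ⟨ha, hb⟩ := hzero A B hBΔ hAB; rw [ha, hb]
      have hm2 : MonotoneGame Δ (-(indicatorGame S)) := by
        intro A B hBΔ hAB
        obtain ⟨ha, hb⟩ := hzero A B hBΔ hAB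
        simp only [Pi.neg_apply, ha, hb]; norm_num
      have e1 := h2 _ h0 hm1
      have e2 := h2 (-(indicatorGame S)) (by simp [Pi.neg_apply, h0]) hm2
      rw [map_neg] at e2
      linarith
    -- coefficients vanish on T ∈ Δ with i ∉ T, insert i T ∉ Δ
    have hC : ∀ T : Finset (Fin n), T ∈ Δ → i ∉ T → insert i T ∉ Δ → T ≠ ∅ →
        φ (indicatorGame T) = 0 := by
      intro T hTΔ hiT hins hTne
      have h0 : (indicatorGame T : Finset (Fin n) → ℝ) ∅ = 0 := by
        simp only [indicatorGame, ite_eq_right_iff]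
        intro h; exact absurd h.symm hTne
      have hd : IsDummy Δ (indicatorGame T) i := by
        intro S hS hiS hinsS
        have e1 : indicatorGame T (insert i S) = 0 := by
          simp only [indicatorGame, ite_eq_right_iff]
          intro h; exact absurd (h ▸ Finset.mem_insert_self i S) hiT
        have e2 : indicatorGame T S = 0 := by
          simp only [indicatorGame, ite_eq_right_iff]
          rintro rfl; exact absurd hinsS hins
        have e3 : indicatorGame T {i} = 0 := by
          simp only [indicatorGame, ite_eq_right_iff]
          intro h; exact absurd (h ▸ Finset.mem_singleton_self i) hiT
        rw [e1, e2, e3, add_zero]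
      have := h1 _ h0 hd
      have e3 : indicatorGame T {i} = 0 := by
        simp only [indicatorGame, ite_eq_right_iff]
        intro h; exact absurd (h ▸ Finset.mem_singleton_self i) hiT
      rw [e3, mul_zero] at this
      exact this
    -- on the link: c T = - c (insert i T)
    have hA : ∀ T ∈ Link i Δ, T ≠ ∅ →
        φ (indicatorGame T) = - φ (indicatorGame (insert i T)) := by
      intro T hT hTne
      obtain ⟨hTΔ, hiT, hins⟩ : T ∈ Δ ∧ i ∉ T ∧ insert i T ∈ Δ := by
        simpa [Link, Finset.mem_filter] using hT
      set v : Finset (Fin n) → ℝ := indicatorGame T + indicatorGame (insert i T) with hv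
      have h0 : v ∅ = 0 := by
        simp only [hv, Pi.add_apply, indicatorGame]
        rw [if_neg (fun h => hTne h.symm), if_neg, add_zero]
        intro h; exact (Finset.insert_ne_empty i T) h.symm
      have hvi : v {i} = 0 := by
        simp only [hv, Pi.add_apply, indicatorGame]
        rw [if_neg, if_neg, add_zero]
        · intro h
          apply hTne
          have hsub : T ⊆ {i} := by
            rw [h]; exact Finset.subset_insert i T
          ext x
          simp only [Finset.notMem_empty, iff_false]
          intro hx
          exact hiT ((Finset.mem_singleton.mp (hsub hx)) ▸ hx)
        · intro h; exact hiT (h ▸ Finset.mem_singleton_self i)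
      have hd : IsDummy Δ v i := by
        intro S hS hiS hinsS
        rw [hvi, add_zero]
        simp only [hv, Pi.add_apply, indicatorGame]
        have e1 : (if insert i S = T then (1:ℝ) else 0) = 0 := by
          rw [if_neg]; intro h; exact hiT (h ▸ Finset.mem_insert_self i S)
        have e2 : (if S = insert i T then (1:ℝ) else 0) = 0 := by
          rw [if_neg]; intro h; exact hiS (h ▸ Finset.mem_insert_self i T)
        have e3 : (insert i S = insert i T) ↔ S = T := by
          constructor
          · intro h
            rw [← Finset.erase_insert hiS, h, Finset.erase_insert hiT]
          · intro h; rw [h]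
        rw [e1, e2, add_zero, zero_add]
        by_cases h : S = T
        · rw [if_pos (e3.mpr h), if_pos h]
        · rw [if_neg (fun hh => h (e3.mp hh)), if_neg h]
      have := h1 v h0 hd
      rw [hvi, mul_zero] at this
      have hadd : φ v = φ (indicatorGame T) + φ (indicatorGame (insert i T)) := by
        rw [hv, map_add]
      linarith
    -- representation over the standard basis
    have hrep : ∀ v : Finset (Fin n) → ℝ,
        φ v = ∑ S : Finset (Fin n), v S * φ (indicatorGame S) := by
      intro v
      have hv : v = ∑ S : Finset (Fin n), v S • indicatorGame S := by
        funext A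
        simp only [Finset.sum_apply, Pi.smul_apply, indicatorGame, smul_eq_mul,
          mul_ite, mul_one, mul_zero]
        rw [Finset.sum_ite_eq Finset.univ A v]
        simp
      conv_lhs => rw [hv]
      rw [map_sum]
      simp [map_smul, smul_eq_mul]
    -- the key formula
    have hkey : ∀ v : Finset (Fin n) → ℝ, v ∅ = 0 →
        φ v = ∑ T ∈ Link i Δ,
          φ (indicatorGame (insert i T)) * (v (insert i T) - v T) := by
      intro v hv0
      rw [hrep v]
      have hML : Disjoint ((Link i Δ).image (insert i)) (Link i Δ) := by
        rw [Finset.disjoint_left]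
        intro S hS hS'
        obtain ⟨T, hT, rfl⟩ := Finset.mem_image.mp hS
        have hiS : i ∉ insert i T := by
          have := Finset.mem_filter.mp hS'
          exact this.2.1
        exact hiS (Finset.mem_insert_self i T)
      have h1s : ∑ S : Finset (Fin n), v S * φ (indicatorGame S)
          = ∑ S ∈ (Link i Δ).image (insert i) ∪ Link i Δ,
              v S * φ (indicatorGame S) := by
        refine (Finset.sum_subset (Finset.subset_univ _) ?_).symm
        intro S _ hS
        rw [Finset.mem_union, not_or] at hS
        obtain ⟨hSM, hSL⟩ := hS
        by_cases hSe : S = ∅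
        · subst hSe; rw [hv0, zero_mul]
        by_cases hiS : i ∈ S
        · have hSΔ : S ∉ Δ := by
            intro hSΔ
            apply hSM
            refine Finset.mem_image.mpr ⟨S.erase i, ?_, Finset.insert_erase hiS⟩
            refine Finset.mem_filter.mpr ⟨hΔ S hSΔ _ (Finset.erase_subset i S),
              Finset.notMem_erase i S, ?_⟩
            rw [Finset.insert_erase hiS]; exact hSΔ
          rw [hB S hSΔ, mul_zero]
        · by_cases hSΔ : S ∈ Δ
          · have hni : insert i S ∉ Δ := by
              intro h; exact hSL (Finset.mem_filter.mpr ⟨hSΔ, hiS, h⟩)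
            rw [hC S hSΔ hiS hni hSe, mul_zero]
          · rw [hB S hSΔ, mul_zero]
      rw [h1s, Finset.sum_union hML]
      have him : ∑ S ∈ (Link i Δ).image (insert i), v S * φ (indicatorGame S)
          = ∑ T ∈ Link i Δ, v (insert i T) * φ (indicatorGame (insert i T)) := by
        refine Finset.sum_image ?_
        intro a ha b hb hab
        have hia : i ∉ a := (Finset.mem_filter.mp ha).2.1
        have hib : i ∉ b := (Finset.mem_filter.mp hb).2.1
        rw [← Finset.erase_insert hia, hab, Finset.erase_insert hib]
      have hlk : ∑ S ∈ Link i Δ, v S * φ (indicatorGame S)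
          = ∑ T ∈ Link i Δ, v T * (- φ (indicatorGame (insert i T))) := by
        refine Finset.sum_congr rfl fun T hT => ?_
        by_cases hTe : T = ∅
        · subst hTe; rw [hv0]; ring
        · rw [hA T hT hTe]
      rw [him, hlk, ← Finset.sum_add_distrib]
      refine Finset.sum_congr rfl fun T hT => ?_
      ring
    refine ⟨fun T => φ (indicatorGame (insert i T)), ?_, ?_, ?_⟩
    · -- nonnegativity via carrierHat
      intro T hT
      obtain ⟨hTΔ, hiT, hins⟩ : T ∈ Δ ∧ i ∉ T ∧ insert i T ∈ Δ := by
        simpa [Link, Finset.mem_filter] using hT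
      have h0 : carrierHat T ∅ = 0 := by
        simp only [carrierHat, ite_eq_right_iff]
        intro h; exact absurd h (by simp)
      have hmono : MonotoneGame Δ (carrierHat T) := by
        intro A B hBΔ hAB
        simp only [carrierHat]
        split_ifs with ha hb hb
        · norm_num
        · exact absurd (lt_of_lt_of_le ha hAB) hb
        · norm_num
        · norm_num
      have hpos := h2 _ h0 hmono
      have hk := hkey (carrierHat T) h0
      have hsum : ∑ T' ∈ Link i Δ, φ (indicatorGame (insert i T')) *
            (carrierHat T (insert i T') - carrierHat T T')
          = φ (indicatorGame (insert i T)) := by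
        rw [Finset.sum_eq_single T]
        · have e1 : carrierHat T (insert i T) = 1 :=
            if_pos (Finset.ssubset_insert hiT)
          have e2 : carrierHat T T = 0 := if_neg (lt_irrefl T)
          rw [e1, e2]; ring
        · intro T' hT' hne
          have hiT' : i ∉ T' := (Finset.mem_filter.mp hT').2.1
          have hdiff : carrierHat T (insert i T') - carrierHat T T' = 0 := by
            simp only [carrierHat]
            by_cases hsub : T ⊆ T'
            · rw [if_pos, if_pos]
              · ring
              · exact Finset.ssubset_iff_subset_ne.mpr ⟨hsub, fun h => hne h.symm⟩
              · refine Finset.ssubset_iff_subset_ne.mpr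
                  ⟨hsub.trans (Finset.subset_insert i T'), ?_⟩
                intro h
                exact hiT (by rw [h]; exact Finset.mem_insert_self i T')
            · rw [if_neg, if_neg]
              · ring
              · intro h; exact hsub h.subset
              · intro h
                apply hsub
                intro x hx
                rcases Finset.mem_insert.mp (h.subset hx) with rfl | hxx
                · exact absurd hx hiT
                · exact hxx
          rw [hdiff, mul_zero]
        · intro h; exact absurd hT h
      rw [hsum] at hk
      linarith
    · -- the probabilities sum to lam, via carrier {i}
      have h0 : carrier {i} ∅ = 0 := by
        simp only [carrier, ite_eq_right_iff]
        intro h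
        exact absurd (h (Finset.mem_singleton_self i)) (Finset.notMem_empty i)
      have hd : IsDummy Δ (carrier {i}) i := by
        intro S hS hiS hinsS
        simp only [carrier, Finset.singleton_subset_iff]
        rw [if_pos (Finset.mem_insert_self i S), if_neg hiS,
          if_pos (Finset.mem_singleton_self i)]
        ring
      have hci : carrier {i} {i} = 1 := by
        simp [carrier]
      have e1 := h1 _ h0 hd
      rw [hci, mul_one] at e1
      have hk := hkey (carrier {i}) h0
      rw [e1] at hk
      rw [hk]
      refine Finset.sum_congr rfl fun T hT => ?_
      have hiT : i ∉ T := (Finset.mem_filter.mp hT).2.1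
      have ea : carrier {i} (insert i T) = 1 := by
        simp [carrier, Finset.singleton_subset_iff]
      have eb : carrier {i} T = 0 := by
        simp [carrier, Finset.singleton_subset_iff, hiT]
      rw [ea, eb]; ring
    · intro v hv0
      exact hkey v hv0
  · rintro ⟨p, hp0, hps, hrepr⟩
    constructor
    · intro v hv0 hd
      rw [hrepr v hv0]
      have hcong : ∀ T ∈ Link i Δ, p T * (v (insert i T) - v T) = p T * v {i} := by
        intro T hT
        have hm := Finset.mem_filter.mp hT
        rw [hd T hm.1 hm.2.1 hm.2.2]; ring
      rw [Finset.sum_congr rfl hcong, ← Finset.sum_mul, hps]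
    · intro v hv0 hm
      rw [hrepr v hv0]
      refine Finset.sum_nonneg fun T hT => ?_
      have hmem := Finset.mem_filter.mp hT
      have := hm T (insert i T) hmem.2.2 (Finset.subset_insert i T)
      exact mul_nonneg (hp0 T hT) (by linarith)
end
end

section
/- Let Δ be a pure simplicial complex on [n] and P a probability distribution on its facets. The group value φᵢ(v) = ∑_{F ∈ Facets_i(Δ)} P(F) Shapley_i^F(v|_F) satisfies the substitution axiom for carrier games: for every nonempty face T ∈ Δ and every pair of players i, j ∈ T, φᵢ(v_T) = φⱼ(v_T). -/
open Finset

noncomputable section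

lemma key_nat (a m : ℕ) :
    (∑ k ∈ range (m+1), m.choose k * ((a+k).factorial * (m-k).factorial)) * (a+1)
      = (a+m+1).factorial := by
  have h1 : ∀ k ∈ range (m+1),
      m.choose k * ((a+k).factorial * (m-k).factorial)
        = m.factorial * a.factorial * (k+a).choose a := by
    intro k hk
    rw [mem_range, Nat.lt_succ_iff] at hk
    have e1 := Nat.choose_mul_factorial_mul_factorial hk
    have e2 := Nat.choose_mul_factorial_mul_factorial (Nat.le_add_left a k)
    have hkf : 0 < k.factorial := Nat.factorial_pos k
    apply Nat.eq_of_mul_eq_mul_left hkf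
    have : (k + a) - a = k := by omega
    rw [this] at e2
    calc k.factorial * (m.choose k * ((a+k).factorial * (m-k).factorial))
        = (m.choose k * k.factorial * (m-k).factorial) * (a+k).factorial := by ring
      _ = m.factorial * (a+k).factorial := by rw [e1]
      _ = m.factorial * ((k+a).choose a * a.factorial * k.factorial) := by
          rw [e2, add_comm a k]
      _ = k.factorial * (m.factorial * a.factorial * (k+a).choose a) := by ring
  rw [Finset.sum_congr rfl h1, ← Finset.mul_sum, Nat.sum_range_add_choose]
  have e3 := Nat.choose_mul_factorial_mul_factorial (show a+1 ≤ a+m+1 by omega)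
  have : (a+m+1) - (a+1) = m := by omega
  rw [this] at e3
  calc m.factorial * a.factorial * (m+a+1).choose (a+1) * (a+1)
      = (m+a+1).choose (a+1) * (a.factorial * (a+1)) * m.factorial := by ring
    _ = (a+m+1).choose (a+1) * (a+1).factorial * m.factorial := by
        rw [Nat.factorial_succ, add_comm m a]; ring
    _ = (a+m+1).factorial := e3

lemma shapley_carrier_of_not_subset {n : ℕ} {F T : Finset (Fin n)} {i : Fin n}
    (hiF : i ∈ F) (hTF : ¬ T ⊆ F) : shapley F i (carrier T) = 0 := by
  unfold shapley
  refine Finset.sum_eq_zero fun S hS => ?_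
  rw [mem_powerset] at hS
  have h1 : ¬ T ⊆ insert i S := fun h => hTF (h.trans (by
    rw [Finset.insert_subset_iff]
    exact ⟨hiF, hS.trans (erase_subset i F)⟩))
  have h2 : ¬ T ⊆ S := fun h => hTF (h.trans (hS.trans (erase_subset i F)))
  simp [carrier, h1, h2]

lemma shapley_carrier_of_subset {n : ℕ} {F T : Finset (Fin n)} {i : Fin n}
    (hiT : i ∈ T) (hTF : T ⊆ F) : shapley F i (carrier T) = 1 / T.card := by
  classical
  have hiF : i ∈ F := hTF hiT
  set A : Finset (Fin n) := T.erase i with hA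
  set E : Finset (Fin n) := F.erase i with hE
  have hAE : A ⊆ E := Finset.erase_subset_erase i hTF
  set a : ℕ := A.card with ha
  set m : ℕ := (E \ A).card with hm
  have hTa : T.card = a + 1 := by
    rw [ha, hA, Finset.card_erase_of_mem hiT]
    have := Finset.card_pos.mpr ⟨i, hiT⟩
    omega
  have hEc : E.card = a + m := by
    rw [hm, card_sdiff_of_subset hAE]
    have := Finset.card_le_card hAE
    omega
  have hFc : F.card = a + m + 1 := by
    rw [hE, Finset.card_erase_of_mem hiF] at hEc
    have := Finset.card_pos.mpr ⟨i, hiF⟩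
    omega
  -- rewrite each summand
  unfold shapley
  have step1 : ∀ S ∈ E.powerset,
      ((Nat.factorial S.card * Nat.factorial (F.card - S.card - 1) : ℝ) /
        (Nat.factorial F.card : ℝ)) * (carrier T (insert i S) - carrier T S)
      = if A ⊆ S then
          ((Nat.factorial S.card * Nat.factorial (F.card - S.card - 1) : ℝ) /
            (Nat.factorial F.card : ℝ)) else 0 := by
    intro S hS
    rw [mem_powerset] at hS
    have hiS : i ∉ S := fun h => (Finset.notMem_erase i F) (hS h)
    have h2 : ¬ T ⊆ S := fun h => hiS (h hiT)
    have h3 : T ⊆ insert i S ↔ A ⊆ S := by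
      rw [hA, ← Finset.erase_subset_iff_of_mem (Finset.mem_insert_self i S)]
      constructor
      · intro h x hx
        have := h hx
        rw [Finset.mem_insert] at this
        rcases this with h' | h'
        · exact absurd (h' ▸ hx) (Finset.notMem_erase i T)
        · exact h'
      · intro h; exact h.trans (Finset.subset_insert i S)
    by_cases hAS : A ⊆ S
    · simp [carrier, h3.mpr hAS, h2, hAS]
    · have : ¬ T ⊆ insert i S := fun h => hAS (h3.mp h)
      simp [carrier, this, h2, hAS]
  rw [Finset.sum_congr rfl step1, Finset.sum_ite, Finset.sum_const_zero, add_zero]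
  -- reindex over powerset of E \ A
  have step2 : ∑ S ∈ E.powerset.filter (fun S => A ⊆ S),
      ((Nat.factorial S.card * Nat.factorial (F.card - S.card - 1) : ℝ) /
        (Nat.factorial F.card : ℝ))
      = ∑ B ∈ (E \ A).powerset,
        ((Nat.factorial (a + B.card) * Nat.factorial (F.card - (a + B.card) - 1) : ℝ) /
          (Nat.factorial F.card : ℝ)) := by
    refine Finset.sum_nbij' (fun S => S \ A) (fun B => A ∪ B) ?_ ?_ ?_ ?_ ?_
    · intro S hS
      rw [Finset.mem_filter, mem_powerset] at hS
      rw [mem_powerset]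
      exact sdiff_subset_sdiff hS.1 (Finset.Subset.refl A)
    · intro B hB
      rw [mem_powerset] at hB
      rw [Finset.mem_filter, mem_powerset]
      exact ⟨Finset.union_subset hAE (hB.trans (sdiff_subset)), Finset.subset_union_left⟩
    · intro S hS
      rw [Finset.mem_filter, mem_powerset] at hS
      exact Finset.union_sdiff_of_subset hS.2
    · intro B hB
      rw [mem_powerset] at hB
      have hd : Disjoint A B := (Finset.sdiff_disjoint.mono_left hB).symm
      exact Finset.union_sdiff_cancel_left hd
    · intro S hS
      rw [Finset.mem_filter, mem_powerset] at hS
      have : (S \ A).card = S.card - a := by rw [card_sdiff_of_subset hS.2]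
      have hle : a ≤ S.card := Finset.card_le_card hS.2
      rw [this]
      have h' : a + (S.card - a) = S.card := by omega
      rw [h']
  rw [step2]
  -- sum over powerset by cardinality
  have hcard : ∀ B ∈ (E \ A).powerset,
      ((Nat.factorial (a + B.card) * Nat.factorial (F.card - (a + B.card) - 1) : ℝ) /
        (Nat.factorial F.card : ℝ))
      = (fun k => ((Nat.factorial (a + k) * Nat.factorial (m - k) : ℝ) /
          (Nat.factorial F.card : ℝ))) B.card := by
    intro B hB
    rw [mem_powerset] at hB
    have hbm : B.card ≤ m := Finset.card_le_card hB
    have : F.card - (a + B.card) - 1 = m - B.card := by omega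
    rw [this]
  rw [Finset.sum_congr rfl hcard,
    Finset.sum_powerset_apply_card
      (fun k => ((Nat.factorial (a + k) * Nat.factorial (m - k) : ℝ) /
        (Nat.factorial F.card : ℝ)))]
  rw [← hm]
  have hkey := key_nat a m
  have hFne : (Nat.factorial F.card : ℝ) ≠ 0 := Nat.cast_ne_zero.mpr (Nat.factorial_ne_zero _)
  have hane : (a + 1 : ℝ) ≠ 0 := by positivity
  rw [hTa]
  have : ∑ k ∈ range (m + 1), m.choose k •
      ((Nat.factorial (a + k) * Nat.factorial (m - k) : ℝ) / (Nat.factorial F.card : ℝ))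
      = ((∑ k ∈ range (m+1), m.choose k * ((a+k).factorial * (m-k).factorial) : ℕ) : ℝ)
        / (Nat.factorial F.card : ℝ) := by
    push_cast
    rw [Finset.sum_div]
    refine Finset.sum_congr rfl fun k _ => ?_
    rw [nsmul_eq_mul]
    push_cast
    ring
  rw [this]
  rw [div_eq_div_iff hFne (Nat.cast_ne_zero.mpr (Nat.succ_ne_zero a))]
  rw [one_mul, hFc]
  exact_mod_cast hkey

theorem substitution_axiom_for_carrier_games {n : ℕ} (Δ : Finset (Finset (Fin n)))
    (hΔ : IsComplex Δ) (hpure : IsPure Δ) (P : Finset (Fin n) → ℝ)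
    (hP0 : ∀ F ∈ Facets Δ, 0 ≤ P F) (hP1 : ∑ F ∈ Facets Δ, P F = 1)
    (T : Finset (Fin n)) (hT : T ∈ Δ) (hTne : T ≠ ∅)
    (i j : Fin n) (hi : i ∈ T) (hj : j ∈ T) :
    (∑ F ∈ FacetsI i Δ, P F * shapley F i (carrier T))
      = ∑ F ∈ FacetsI j Δ, P F * shapley F j (carrier T) := by
  classical
  have main : ∀ k : Fin n, k ∈ T →
      ∑ F ∈ FacetsI k Δ, P F * shapley F k (carrier T)
        = (∑ F ∈ (Facets Δ).filter (fun F => T ⊆ F), P F) / T.card := by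
    intro k hk
    rw [← Finset.sum_filter_add_sum_filter_not (FacetsI k Δ) (fun F => T ⊆ F)]
    have hz : ∑ F ∈ (FacetsI k Δ).filter (fun F => ¬ T ⊆ F),
        P F * shapley F k (carrier T) = 0 := by
      refine Finset.sum_eq_zero fun F hF => ?_
      rw [Finset.mem_filter] at hF
      have hkF : k ∈ F := (Finset.mem_filter.mp hF.1).2
      rw [shapley_carrier_of_not_subset hkF hF.2, mul_zero]
    rw [hz, add_zero]
    have hfe : (FacetsI k Δ).filter (fun F => T ⊆ F)
        = (Facets Δ).filter (fun F => T ⊆ F) := by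
      unfold FacetsI
      rw [Finset.filter_filter]
      refine Finset.filter_congr fun F _ => ?_
      constructor
      · exact fun h => h.2
      · exact fun h => ⟨h hk, h⟩
    rw [hfe, Finset.sum_div]
    refine Finset.sum_congr rfl fun F hF => ?_
    rw [Finset.mem_filter] at hF
    rw [shapley_carrier_of_subset hk hF.2]
    rw [div_eq_mul_inv, div_eq_mul_inv, one_mul]
  rw [main i hi, main j hj]
end
end
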